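/- Assume d·γ ≤ 2·γ*. There exists c > 0, depending only on ℓ, α, m, d, J, γ, γ*, such that for every λ ∈ ℝ with |λ| ≥ 1 and every solution (u, v, w, z) of the resolvent system with data (f₁, f₂, f₄): |u'(0)|·|u'''(0)| ≤ c·(‖U‖·‖F‖ + ‖F‖²) and |u'(0)|·|u''(0)| ≤ c·(‖U‖·‖F‖ + ‖F‖²). -/

import Mathlib

open MeasureTheory ComplexConjugate

section Aux
open intervalIntegral Set

lemma my_ftc {a b : ℝ} (hab : a ≤ b) {f f' : ℝ → ℂ}
    (hf : ∀ x ∈ Icc a b, HasDerivWithinAt f (f' x) (Icc a b) x)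
    (hc : ContinuousOn f' (Icc a b)) : ∫ y in a..b, f' y = f b - f a := by
  apply integral_eq_sub_of_hasDeriv_right_of_le hab
    (fun x hx => (hf x hx).continuousWithinAt)
    (fun x hx => (((hf x (Ioo_subset_Icc_self hx)).hasDerivAt
      (Icc_mem_nhds hx.1 hx.2)).hasDerivWithinAt))
  exact (hc.mono (by rw [uIcc_of_le hab])).intervalIntegrable

lemma my_ibp {a b : ℝ} (hab : a ≤ b) {f g f' g' : ℝ → ℂ}
    (hf : ∀ x ∈ Icc a b, HasDerivWithinAt f (f' x) (Icc a b) x)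
    (hg : ∀ x ∈ Icc a b, HasDerivWithinAt g (g' x) (Icc a b) x)
    (hcf : ContinuousOn f' (Icc a b)) (hcg : ContinuousOn g' (Icc a b)) :
    ∫ x in a..b, (f' x * g x + f x * g' x) = f b * g b - f a * g a := by
  apply my_ftc hab (f := fun x => f x * g x) (fun x hx => (hf x hx).mul (hg x hx))
  have hfc : ContinuousOn f (Icc a b) := fun x hx => (hf x hx).continuousWithinAt
  have hgc : ContinuousOn g (Icc a b) := fun x hx => (hg x hx).continuousWithinAt
  exact (hcf.mul hgc).add (hfc.mul hcg)

lemma my_cs {a b : ℝ} (hab : a ≤ b) {f g : ℝ → ℝ}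
    (hf : ContinuousOn f (Icc a b)) (hg : ContinuousOn g (Icc a b)) :
    ∫ x in a..b, f x * g x ≤
      Real.sqrt (∫ x in a..b, f x ^ 2) * Real.sqrt (∫ x in a..b, g x ^ 2) := by
  have hIcc : uIcc a b = Icc a b := uIcc_of_le hab
  have hif : IntervalIntegrable (fun x => f x ^ 2) volume a b :=
    ((hf.mono hIcc.le).pow 2).intervalIntegrable
  have hig : IntervalIntegrable (fun x => g x ^ 2) volume a b :=
    ((hg.mono hIcc.le).pow 2).intervalIntegrable
  have hifg : IntervalIntegrable (fun x => f x * g x) volume a b :=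
    ((hf.mono hIcc.le).mul (hg.mono hIcc.le)).intervalIntegrable
  set A := ∫ x in a..b, f x ^ 2 with hA
  set B := ∫ x in a..b, f x * g x with hB
  set C := ∫ x in a..b, g x ^ 2 with hC
  have hAnn : 0 ≤ A := integral_nonneg hab (fun x _ => sq_nonneg _)
  have hCnn : 0 ≤ C := integral_nonneg hab (fun x _ => sq_nonneg _)
  have key : ∀ t : ℝ, 0 ≤ A * (t * t) + (2 * B) * t + C := by
    intro t
    have h1 : ∀ x, (t * f x + g x) ^ 2 =
        (t*t) * f x ^ 2 + (2*t) * (f x * g x) + g x ^ 2 := by intro x; ring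
    have h2 : (0:ℝ) ≤ ∫ x in a..b, (t * f x + g x) ^ 2 :=
      integral_nonneg hab (fun x _ => sq_nonneg _)
    calc (0:ℝ) ≤ ∫ x in a..b, (t * f x + g x) ^ 2 := h2
      _ = (t*t) * A + (2*t) * B + C := by
          simp only [h1]
          rw [integral_add (((hif.const_mul _).add (hifg.const_mul _))) hig,
            integral_add (hif.const_mul _) (hifg.const_mul _),
            intervalIntegral.integral_const_mul, intervalIntegral.integral_const_mul]
      _ = A * (t * t) + (2 * B) * t + C := by ring
  have hd := discrim_le_zero key
  rw [discrim] at hd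
  have hB2 : B ^ 2 ≤ A * C := by nlinarith
  calc B ≤ |B| := le_abs_self B
    _ = Real.sqrt (B ^ 2) := (Real.sqrt_sq_eq_abs B).symm
    _ ≤ Real.sqrt (A * C) := Real.sqrt_le_sqrt hB2
    _ = Real.sqrt A * Real.sqrt C := Real.sqrt_mul hAnn C


lemma normsq_expand (x : ℂ) : ‖x‖^2 = x.re^2 + x.im^2 := by
  rw [Complex.sq_norm, Complex.normSq_apply]; ring

lemma norm_shift (c : ℝ) (w z : ℂ) :
    ‖w + (c:ℂ)*z‖^2 = ‖w‖^2 + 2*c*((w * conj z).re) + c^2*‖z‖^2 := by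
  simp only [normsq_expand, Complex.add_re, Complex.add_im, Complex.mul_re, Complex.mul_im,
    Complex.ofReal_re, Complex.ofReal_im, Complex.conj_re, Complex.conj_im]
  ring

lemma re_energy (α lam rv ru : ℝ) (a3 a2 Ix If : ℂ)
    (h : Complex.I*(lam:ℂ)*(rv:ℂ) +
      (α:ℂ)*(-a3 + a2 - Complex.I*(lam:ℂ)*(ru:ℂ) - Ix) = If) :
    α*(a2.re - a3.re - Ix.re) = If.re := by
  have h1 := congrArg Complex.re h
  simp only [Complex.add_re, Complex.sub_re, Complex.neg_re, Complex.mul_re, Complex.mul_im,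
    Complex.add_im, Complex.sub_im, Complex.neg_im,
    Complex.I_re, Complex.I_im, Complex.ofReal_re, Complex.ofReal_im] at h1
  linear_combination h1

lemma re_boundary (m d J γ γs α lam : ℝ) (w z p2 p3 f41 f42 : ℂ)
    (h3 : Complex.I * (lam : ℂ) * ((m : ℂ) * w + (m : ℂ) * (d : ℂ) * z) +
      (γ : ℂ) * w + (α : ℂ) * p3 = (m : ℂ) * f41 + (m : ℂ) * (d : ℂ) * f42)
    (h4 : Complex.I * (lam : ℂ) * ((m : ℂ) * (d : ℂ) * w +
        ((J : ℂ) + (m : ℂ) * (d : ℂ) ^ 2) * z) +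
      (d : ℂ) * (γ : ℂ) * w + (d : ℂ) * (γs : ℂ) * z - (α : ℂ) * p2 =
      (m : ℂ) * (d : ℂ) * f41 + ((J : ℂ) + (m : ℂ) * (d : ℂ) ^ 2) * f42) :
    γ*‖w‖^2 + d*γ*((w * conj z).re) + d*γs*‖z‖^2
      + α*((p3 * conj w).re - (p2 * conj z).re)
    = m*((f41 * conj w).re) + m*d*((f42 * conj w).re)
      + m*d*((f41 * conj z).re) + (J+m*d^2)*((f42 * conj z).re) := by
  have hC : (Complex.I * (lam : ℂ) * ((m : ℂ) * w + (m : ℂ) * (d : ℂ) * z) +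
      (γ : ℂ) * w + (α : ℂ) * p3) * conj w +
      (Complex.I * (lam : ℂ) * ((m : ℂ) * (d : ℂ) * w +
        ((J : ℂ) + (m : ℂ) * (d : ℂ) ^ 2) * z) +
      (d : ℂ) * (γ : ℂ) * w + (d : ℂ) * (γs : ℂ) * z - (α : ℂ) * p2) * conj z =
      ((m : ℂ) * f41 + (m : ℂ) * (d : ℂ) * f42) * conj w +
      ((m : ℂ) * (d : ℂ) * f41 + ((J : ℂ) + (m : ℂ) * (d : ℂ) ^ 2) * f42) * conj z := by
    rw [h3, h4]
  have h1 := congrArg Complex.re hC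
  simp only [← Complex.ofReal_pow, Complex.add_re, Complex.sub_re, Complex.neg_re,
    Complex.mul_re, Complex.mul_im, Complex.add_im, Complex.sub_im, Complex.neg_im,
    Complex.I_re, Complex.I_im, Complex.ofReal_re, Complex.ofReal_im,
    Complex.conj_re, Complex.conj_im] at h1
  simp only [normsq_expand, Complex.mul_re, Complex.conj_re, Complex.conj_im]
  linear_combination h1

lemma abs_re_mul_conj (x y : ℂ) : |(x * conj y).re| ≤ ‖x‖*‖y‖ := by
  calc |(x * conj y).re| ≤ ‖x * conj y‖ := Complex.abs_re_le_norm _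
    _ = ‖x‖*‖y‖ := by
        rw [norm_mul, Complex.norm_conj]

end Aux



/-- A solution `(λ, u, v, w, z)` (with `w = v 0`, `z = v1 0`) of the resolvent system of the
hybrid Euler–Bernoulli beam with tip body, with data `(f₁, f₂, f₄)`. The fields `u1,…,u4`
(resp. `v1, v2`, `f1d, f1dd`) are the successive derivatives of `u` (resp. `v`, `f1`)
on `[0,ℓ]`. -/
structure ResolventSol (ℓ α m d J γ γs : ℝ) where
  lam : ℝ
  u : ℝ → ℂ
  u1 : ℝ → ℂ
  u2 : ℝ → ℂ
  u3 : ℝ → ℂ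
  u4 : ℝ → ℂ
  v : ℝ → ℂ
  v1 : ℝ → ℂ
  v2 : ℝ → ℂ
  f1 : ℝ → ℂ
  f1d : ℝ → ℂ
  f1dd : ℝ → ℂ
  f2 : ℝ → ℂ
  f41 : ℂ
  f42 : ℂ
  hu1 : ∀ x ∈ Set.Icc (0:ℝ) ℓ, HasDerivWithinAt u (u1 x) (Set.Icc 0 ℓ) x
  hu2 : ∀ x ∈ Set.Icc (0:ℝ) ℓ, HasDerivWithinAt u1 (u2 x) (Set.Icc 0 ℓ) x
  hu3 : ∀ x ∈ Set.Icc (0:ℝ) ℓ, HasDerivWithinAt u2 (u3 x) (Set.Icc 0 ℓ) x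
  hu4 : ∀ x ∈ Set.Icc (0:ℝ) ℓ, HasDerivWithinAt u3 (u4 x) (Set.Icc 0 ℓ) x
  hu4c : ContinuousOn u4 (Set.Icc 0 ℓ)
  hv1 : ∀ x ∈ Set.Icc (0:ℝ) ℓ, HasDerivWithinAt v (v1 x) (Set.Icc 0 ℓ) x
  hv2 : ∀ x ∈ Set.Icc (0:ℝ) ℓ, HasDerivWithinAt v1 (v2 x) (Set.Icc 0 ℓ) x
  hv2c : ContinuousOn v2 (Set.Icc 0 ℓ)
  hf11 : ∀ x ∈ Set.Icc (0:ℝ) ℓ, HasDerivWithinAt f1 (f1d x) (Set.Icc 0 ℓ) x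
  hf12 : ∀ x ∈ Set.Icc (0:ℝ) ℓ, HasDerivWithinAt f1d (f1dd x) (Set.Icc 0 ℓ) x
  hf1c : ContinuousOn f1dd (Set.Icc 0 ℓ)
  hf2c : ContinuousOn f2 (Set.Icc 0 ℓ)
  res1 : ∀ x ∈ Set.Icc (0:ℝ) ℓ, Complex.I * (lam : ℂ) * u x - v x = f1 x
  res2 : ∀ x ∈ Set.Icc (0:ℝ) ℓ, Complex.I * (lam : ℂ) * v x + (α : ℂ) * u4 x = f2 x
  res3 : Complex.I * (lam : ℂ) * ((m : ℂ) * v 0 + (m : ℂ) * (d : ℂ) * v1 0) +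
      (γ : ℂ) * v 0 + (α : ℂ) * u3 0 = (m : ℂ) * f41 + (m : ℂ) * (d : ℂ) * f42
  res4 : Complex.I * (lam : ℂ) * ((m : ℂ) * (d : ℂ) * v 0 +
        ((J : ℂ) + (m : ℂ) * (d : ℂ) ^ 2) * v1 0) +
      (d : ℂ) * (γ : ℂ) * v 0 + (d : ℂ) * (γs : ℂ) * v1 0 - (α : ℂ) * u2 0 =
      (m : ℂ) * (d : ℂ) * f41 + ((J : ℂ) + (m : ℂ) * (d : ℂ) ^ 2) * f42
  bcu : u ℓ = 0
  bcu1 : u1 ℓ = 0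
  bcv : v ℓ = 0
  bcv1 : v1 ℓ = 0

variable {ℓ α m d J γ γs : ℝ}

/-- The phase-space norm `‖U‖` of a resolvent solution. -/
noncomputable def normU (R : ResolventSol ℓ α m d J γ γs) : ℝ :=
  Real.sqrt ((∫ x in (0:ℝ)..ℓ, (‖R.v x‖ ^ 2 + α * ‖R.u2 x‖ ^ 2)) +
    m * ‖R.v 0‖ ^ 2 + 2 * m * d * (R.v 0 * conj (R.v1 0)).re +
    (J + m * d ^ 2) * ‖R.v1 0‖ ^ 2)

/-- The phase-space norm `‖F‖` of the data of a resolvent solution. -/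
noncomputable def normF (R : ResolventSol ℓ α m d J γ γs) : ℝ :=
  Real.sqrt ((∫ x in (0:ℝ)..ℓ, (‖R.f2 x‖ ^ 2 + α * ‖R.f1dd x‖ ^ 2)) +
    m * ‖R.f41‖ ^ 2 + 2 * m * d * (R.f41 * conj R.f42).re +
    (J + m * d ^ 2) * ‖R.f42‖ ^ 2)

set_option maxHeartbeats 1600000

/-- Boundary-term estimates for the resolvent system: for `|λ| ≥ 1`,
`|u'(0)| |u'''(0)| ≤ c(‖U‖‖F‖ + ‖F‖²)` and `|u'(0)| |u''(0)| ≤ c(‖U‖‖F‖ + ‖F‖²)`. -/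
theorem resolvent_boundary_terms (ℓ α m d J γ γs : ℝ)
    (hℓ : 0 < ℓ) (hα : 0 < α) (hm : 0 < m) (hd : 0 < d) (hJ : 0 < J)
    (hγ : 0 < γ) (hγs : 0 < γs) (hyp : d * γ ≤ 2 * γs) :
    ∃ c > 0, ∀ R : ResolventSol ℓ α m d J γ γs, 1 ≤ |R.lam| →
      ‖R.u1 0‖ * ‖R.u3 0‖ ≤ c * (normU R * normF R + (normF R) ^ 2) ∧
      ‖R.u1 0‖ * ‖R.u2 0‖ ≤ c * (normU R * normF R + (normF R) ^ 2) := by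
  classical
  skip
  set sm := Real.sqrt m with hsm
  set sJ := Real.sqrt J with hsJ
  set K := 1/sm + (d+1)/sJ with hKdef
  set a := Real.sqrt (ℓ/α) with hadef
  set CD := 2 + (m + 2*m*d + J + m*d^2)*K^2 with hCD
  set T := (4/γ + 4/(γ*d^2)) * CD with hTdef
  set sT := Real.sqrt T with hsT
  set c5 := (m + m*d)*K with hc5
  set c6 := (γ + m + m*d)*sT with hc6
  set c7 := (m*d + J + m*d^2)*K with hc7
  set c8 := (d*γ + d*γs + m*d + J + m*d^2)*sT with hc8
  have hsm0 : 0 < sm := Real.sqrt_pos.2 hm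
  have hsJ0 : 0 < sJ := Real.sqrt_pos.2 hJ
  have hK0 : 0 < K := by positivity
  have ha0 : 0 < a := Real.sqrt_pos.2 (by positivity)
  have hCD0 : 0 < CD := by positivity
  have hT0 : 0 < T := by positivity
  have hsT0 : 0 ≤ sT := Real.sqrt_nonneg _
  have hc50 : 0 < c5 := by positivity
  have hc60 : 0 ≤ c6 := by positivity
  have hc70 : 0 < c7 := by positivity
  have hc80 : 0 ≤ c8 := by positivity
  refine ⟨((sT + a)*(c5 + c6 + c7 + c8) + 1)/α, by positivity, fun R hlam => ?_⟩
  have hab : (0:ℝ) ≤ ℓ := hℓ.le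
  have hIcc : Set.uIcc (0:ℝ) ℓ = Set.Icc 0 ℓ := Set.uIcc_of_le hab
  have h0mem : (0:ℝ) ∈ Set.Icc (0:ℝ) ℓ := Set.mem_Icc.2 ⟨le_rfl, hab⟩
  have hlmem : ℓ ∈ Set.Icc (0:ℝ) ℓ := Set.mem_Icc.2 ⟨hab, le_rfl⟩
  -- continuity
  have cu2 : ContinuousOn R.u2 (Set.Icc 0 ℓ) := fun x hx => (R.hu3 x hx).continuousWithinAt
  have cu3 : ContinuousOn R.u3 (Set.Icc 0 ℓ) := fun x hx => (R.hu4 x hx).continuousWithinAt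
  have cv : ContinuousOn R.v (Set.Icc 0 ℓ) := fun x hx => (R.hv1 x hx).continuousWithinAt
  have cv1 : ContinuousOn R.v1 (Set.Icc 0 ℓ) := fun x hx => (R.hv2 x hx).continuousWithinAt
  have cf1d : ContinuousOn R.f1d (Set.Icc 0 ℓ) := fun x hx => (R.hf12 x hx).continuousWithinAt
  -- first derivative of resolvent equation 1
  have hD1 : ∀ x ∈ Set.Icc (0:ℝ) ℓ,
      Complex.I*(R.lam:ℂ)*R.u1 x - R.v1 x = R.f1d x := by
    intro x hx
    have hder : HasDerivWithinAt R.f1 (Complex.I*(R.lam:ℂ)*R.u1 x - R.v1 x) (Set.Icc 0 ℓ) x :=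
      (((R.hu1 x hx).const_mul (Complex.I*(R.lam:ℂ))).sub (R.hv1 x hx)).congr
        (fun y hy => (R.res1 y hy).symm) ((R.res1 x hx).symm)
    exact UniqueDiffWithinAt.eq_deriv _ (uniqueDiffOn_Icc hℓ x hx) hder (R.hf11 x hx)
  -- second derivative of resolvent equation 1
  have hD2 : ∀ x ∈ Set.Icc (0:ℝ) ℓ,
      Complex.I*(R.lam:ℂ)*R.u2 x - R.v2 x = R.f1dd x := by
    intro x hx
    have hder : HasDerivWithinAt R.f1d (Complex.I*(R.lam:ℂ)*R.u2 x - R.v2 x) (Set.Icc 0 ℓ) x :=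
      (((R.hu2 x hx).const_mul (Complex.I*(R.lam:ℂ))).sub (R.hv2 x hx)).congr
        (fun y hy => (hD1 y hy).symm) ((hD1 x hx).symm)
    exact UniqueDiffWithinAt.eq_deriv _ (uniqueDiffOn_Icc hℓ x hx) hder (R.hf12 x hx)
  have hf1dl : R.f1d ℓ = 0 := by
    have h := hD1 ℓ hlmem
    rw [R.bcu1, R.bcv1] at h
    simpa using h.symm
  have hf1d0 : R.f1d 0 = -∫ x in (0:ℝ)..ℓ, R.f1dd x := by
    rw [my_ftc hab R.hf12 R.hf1c, hf1dl]; ring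
  -- norms
  set N := normU R with hNdef
  set Fn := normF R with hFdef
  set Jv := ∫ x in (0:ℝ)..ℓ, ‖R.v x‖^2 with hJvdef
  set Ju := ∫ x in (0:ℝ)..ℓ, ‖R.u2 x‖^2 with hJudef
  set Jf2 := ∫ x in (0:ℝ)..ℓ, ‖R.f2 x‖^2 with hJf2def
  set Jf1 := ∫ x in (0:ℝ)..ℓ, ‖R.f1dd x‖^2 with hJf1def
  have hN0 : 0 ≤ N := Real.sqrt_nonneg _
  have hF0 : 0 ≤ Fn := Real.sqrt_nonneg _
  have hJv0 : 0 ≤ Jv := intervalIntegral.integral_nonneg hab (fun x _ => sq_nonneg _)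
  have hJu0 : 0 ≤ Ju := intervalIntegral.integral_nonneg hab (fun x _ => sq_nonneg _)
  have hJf20 : 0 ≤ Jf2 := intervalIntegral.integral_nonneg hab (fun x _ => sq_nonneg _)
  have hJf10 : 0 ≤ Jf1 := intervalIntegral.integral_nonneg hab (fun x _ => sq_nonneg _)
  have hiv2 : IntervalIntegrable (fun x => ‖R.v x‖^2) volume 0 ℓ :=
    ((cv.norm.pow 2).mono hIcc.le).intervalIntegrable
  have hiu2 : IntervalIntegrable (fun x => ‖R.u2 x‖^2) volume 0 ℓ :=
    ((cu2.norm.pow 2).mono hIcc.le).intervalIntegrable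
  have hif2 : IntervalIntegrable (fun x => ‖R.f2 x‖^2) volume 0 ℓ :=
    ((R.hf2c.norm.pow 2).mono hIcc.le).intervalIntegrable
  have hif1 : IntervalIntegrable (fun x => ‖R.f1dd x‖^2) volume 0 ℓ :=
    ((R.hf1c.norm.pow 2).mono hIcc.le).intervalIntegrable
  have hquadU : m*‖R.v 0‖^2 + 2*m*d*((R.v 0 * conj (R.v1 0)).re) + (J+m*d^2)*‖R.v1 0‖^2
      = m*‖R.v 0 + (d:ℂ)*R.v1 0‖^2 + J*‖R.v1 0‖^2 := by
    rw [norm_shift]; ring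
  have hquadF : m*‖R.f41‖^2 + 2*m*d*((R.f41 * conj R.f42).re) + (J+m*d^2)*‖R.f42‖^2
      = m*‖R.f41 + (d:ℂ)*R.f42‖^2 + J*‖R.f42‖^2 := by
    rw [norm_shift]; ring
  have hq1 : 0 ≤ m*‖R.v 0 + (d:ℂ)*R.v1 0‖^2 := by positivity
  have hq1' : 0 ≤ J*‖R.v1 0‖^2 := by positivity
  have hq2 : 0 ≤ m*‖R.f41 + (d:ℂ)*R.f42‖^2 := by positivity
  have hq2' : 0 ≤ J*‖R.f42‖^2 := by positivity
  have hJusc : 0 ≤ α*Ju := mul_nonneg hα.le hJu0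
  have hJf1sc : 0 ≤ α*Jf1 := mul_nonneg hα.le hJf10
  have hNsq : N^2 = Jv + α*Ju + (m*‖R.v 0 + (d:ℂ)*R.v1 0‖^2 + J*‖R.v1 0‖^2) := by
    rw [hNdef, normU, Real.sq_sqrt]
    · rw [intervalIntegral.integral_add hiv2 (hiu2.const_mul α),
        intervalIntegral.integral_const_mul]
      linarith [hquadU]
    · rw [intervalIntegral.integral_add hiv2 (hiu2.const_mul α),
        intervalIntegral.integral_const_mul]
      linarith [hquadU]
  have hFsq : Fn^2 = Jf2 + α*Jf1 + (m*‖R.f41 + (d:ℂ)*R.f42‖^2 + J*‖R.f42‖^2) := by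
    rw [hFdef, normF, Real.sq_sqrt]
    · rw [intervalIntegral.integral_add hif2 (hif1.const_mul α),
        intervalIntegral.integral_const_mul]
      linarith [hquadF]
    · rw [intervalIntegral.integral_add hif2 (hif1.const_mul α),
        intervalIntegral.integral_const_mul]
      linarith [hquadF]
  have hJvN : Jv ≤ N^2 := by linarith
  have hJuN : α*Ju ≤ N^2 := by linarith
  have hJf2F : Jf2 ≤ Fn^2 := by linarith
  have hJf1F : α*Jf1 ≤ Fn^2 := by linarith
  -- pointwise bounds on w, z, f41, f42
  have sqrt_bound : ∀ (mm : ℝ) (x : ℂ) (t : ℝ), 0 < mm → 0 ≤ t → mm*‖x‖^2 ≤ t^2 →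
      ‖x‖ ≤ t / Real.sqrt mm := by
    intro mm x t hmm ht h
    have h1 : ‖x‖^2 ≤ (t / Real.sqrt mm)^2 := by
      rw [div_pow, Real.sq_sqrt hmm.le, le_div_iff₀ hmm]; linarith
    have h2 : 0 ≤ t / Real.sqrt mm := by positivity
    calc ‖x‖ = Real.sqrt (‖x‖^2) := (Real.sqrt_sq (norm_nonneg x)).symm
      _ ≤ Real.sqrt ((t / Real.sqrt mm)^2) := Real.sqrt_le_sqrt h1
      _ = t / Real.sqrt mm := Real.sqrt_sq h2
  have hKsJ : 1/sJ ≤ K := by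
    rw [hKdef]
    have h1 : 1/sJ ≤ (d+1)/sJ := by gcongr; norm_num; linarith
    have h2 : (0:ℝ) ≤ 1/sm := by positivity
    linarith
  have hzK : ‖R.v1 0‖ ≤ K*N := by
    have h := sqrt_bound J (R.v1 0) N hJ hN0 (by linarith)
    calc ‖R.v1 0‖ ≤ N / sJ := h
      _ = (1/sJ)*N := by ring
      _ ≤ K*N := mul_le_mul_of_nonneg_right hKsJ hN0
  have hwK : ‖R.v 0‖ ≤ K*N := by
    have h1 := sqrt_bound m (R.v 0 + (d:ℂ)*R.v1 0) N hm hN0 (by linarith)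
    have h2 := sqrt_bound J (R.v1 0) N hJ hN0 (by linarith)
    have h3 : ‖R.v 0‖ ≤ ‖R.v 0 + (d:ℂ)*R.v1 0‖ + d*‖R.v1 0‖ := by
      calc ‖R.v 0‖ = ‖(R.v 0 + (d:ℂ)*R.v1 0) - (d:ℂ)*R.v1 0‖ := by ring_nf
        _ ≤ ‖R.v 0 + (d:ℂ)*R.v1 0‖ + ‖(d:ℂ)*R.v1 0‖ := norm_sub_le _ _
        _ = ‖R.v 0 + (d:ℂ)*R.v1 0‖ + d*‖R.v1 0‖ := by
            rw [norm_mul, Complex.norm_real, Real.norm_eq_abs, abs_of_pos hd]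
    calc ‖R.v 0‖ ≤ N/sm + d*(N/sJ) := by
          have : d*‖R.v1 0‖ ≤ d*(N/sJ) := mul_le_mul_of_nonneg_left h2 hd.le
          linarith
      _ = (1/sm + d/sJ)*N := by ring
      _ ≤ K*N := by
          apply mul_le_mul_of_nonneg_right _ hN0
          rw [hKdef]
          have : d/sJ ≤ (d+1)/sJ := by gcongr <;> linarith
          linarith
  have hf42K : ‖R.f42‖ ≤ K*Fn := by
    have h := sqrt_bound J R.f42 Fn hJ hF0 (by linarith)
    calc ‖R.f42‖ ≤ Fn / sJ := h
      _ = (1/sJ)*Fn := by ring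
      _ ≤ K*Fn := mul_le_mul_of_nonneg_right hKsJ hF0
  have hf41K : ‖R.f41‖ ≤ K*Fn := by
    have h1 := sqrt_bound m (R.f41 + (d:ℂ)*R.f42) Fn hm hF0 (by linarith)
    have h2 := sqrt_bound J R.f42 Fn hJ hF0 (by linarith)
    have h3 : ‖R.f41‖ ≤ ‖R.f41 + (d:ℂ)*R.f42‖ + d*‖R.f42‖ := by
      calc ‖R.f41‖ = ‖(R.f41 + (d:ℂ)*R.f42) - (d:ℂ)*R.f42‖ := by ring_nf
        _ ≤ ‖R.f41 + (d:ℂ)*R.f42‖ + ‖(d:ℂ)*R.f42‖ := norm_sub_le _ _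
        _ = ‖R.f41 + (d:ℂ)*R.f42‖ + d*‖R.f42‖ := by
            rw [norm_mul, Complex.norm_real, Real.norm_eq_abs, abs_of_pos hd]
    calc ‖R.f41‖ ≤ Fn/sm + d*(Fn/sJ) := by
          have : d*‖R.f42‖ ≤ d*(Fn/sJ) := mul_le_mul_of_nonneg_left h2 hd.le
          linarith
      _ = (1/sm + d/sJ)*Fn := by ring
      _ ≤ K*Fn := by
          apply mul_le_mul_of_nonneg_right _ hF0
          rw [hKdef]
          have : d/sJ ≤ (d+1)/sJ := by gcongr <;> linarith
          linarith
  -- conjugate derivatives and continuity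
  have hcvD : ∀ x ∈ Set.Icc (0:ℝ) ℓ,
      HasDerivWithinAt (fun y => conj (R.v y)) (conj (R.v1 x)) (Set.Icc 0 ℓ) x := by
    intro x hx
    simpa only [starRingEnd_apply] using (R.hv1 x hx).star
  have hcv1D : ∀ x ∈ Set.Icc (0:ℝ) ℓ,
      HasDerivWithinAt (fun y => conj (R.v1 y)) (conj (R.v2 x)) (Set.Icc 0 ℓ) x := by
    intro x hx
    simpa only [starRingEnd_apply] using (R.hv2 x hx).star
  have ccv : ContinuousOn (fun x => conj (R.v x)) (Set.Icc 0 ℓ) := by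
    simpa only [starRingEnd_apply, Function.comp_def] using (continuous_star.comp_continuousOn cv)
  have ccv1 : ContinuousOn (fun x => conj (R.v1 x)) (Set.Icc 0 ℓ) := by
    simpa only [starRingEnd_apply, Function.comp_def] using (continuous_star.comp_continuousOn cv1)
  have ccv2 : ContinuousOn (fun x => conj (R.v2 x)) (Set.Icc 0 ℓ) := by
    simpa only [starRingEnd_apply, Function.comp_def] using (continuous_star.comp_continuousOn R.hv2c)
  have ccf1dd : ContinuousOn (fun x => conj (R.f1dd x)) (Set.Icc 0 ℓ) := by
    simpa only [starRingEnd_apply, Function.comp_def] using (continuous_star.comp_continuousOn R.hf1c)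
  -- interval integrability of products
  have hi1 : IntervalIntegrable (fun x => R.u4 x * conj (R.v x)) volume 0 ℓ :=
    ((R.hu4c.mul ccv).mono hIcc.le).intervalIntegrable
  have hi2 : IntervalIntegrable (fun x => R.u3 x * conj (R.v1 x)) volume 0 ℓ :=
    ((cu3.mul ccv1).mono hIcc.le).intervalIntegrable
  have hi3 : IntervalIntegrable (fun x => R.u2 x * conj (R.v2 x)) volume 0 ℓ :=
    ((cu2.mul ccv2).mono hIcc.le).intervalIntegrable
  have hi4 : IntervalIntegrable (fun x => R.u2 x * conj (R.u2 x)) volume 0 ℓ :=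
    ((cu2.mul (by simpa only [starRingEnd_apply, Function.comp_def] using (continuous_star.comp_continuousOn cu2))).mono
      hIcc.le).intervalIntegrable
  have hi5 : IntervalIntegrable (fun x => R.u2 x * conj (R.f1dd x)) volume 0 ℓ :=
    ((cu2.mul ccf1dd).mono hIcc.le).intervalIntegrable
  have hi6 : IntervalIntegrable (fun x => R.v x * conj (R.v x)) volume 0 ℓ :=
    ((cv.mul ccv).mono hIcc.le).intervalIntegrable
  have hi7 : IntervalIntegrable (fun x => R.f2 x * conj (R.v x)) volume 0 ℓ :=
    ((R.hf2c.mul ccv).mono hIcc.le).intervalIntegrable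
  -- named complex integrals
  set Ix := ∫ x in (0:ℝ)..ℓ, R.u2 x * conj (R.f1dd x) with hIxdef
  set If := ∫ x in (0:ℝ)..ℓ, R.f2 x * conj (R.v x) with hIfdef
  -- integration by parts chain
  have e2 : (∫ x in (0:ℝ)..ℓ, R.u4 x * conj (R.v x))
      = -(R.u3 0 * conj (R.v 0)) - ∫ x in (0:ℝ)..ℓ, R.u3 x * conj (R.v1 x) := by
    have h := my_ibp hab R.hu4 hcvD R.hu4c ccv1
    rw [intervalIntegral.integral_add hi1 hi2, R.bcv] at h
    simp only [mul_zero, map_zero] at h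
    linear_combination h
  have e3 : (∫ x in (0:ℝ)..ℓ, R.u3 x * conj (R.v1 x))
      = -(R.u2 0 * conj (R.v1 0)) - ∫ x in (0:ℝ)..ℓ, R.u2 x * conj (R.v2 x) := by
    have h := my_ibp hab R.hu3 hcv1D cu3 ccv2
    rw [intervalIntegral.integral_add hi2 hi3, R.bcv1] at h
    simp only [mul_zero, map_zero] at h
    linear_combination h
  -- rewrite the inner-most integral using the differentiated resolvent identity
  have hIuR : (∫ x in (0:ℝ)..ℓ, R.u2 x * conj (R.u2 x)) = ((Ju:ℝ):ℂ) := by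
    rw [hJudef, ← intervalIntegral.integral_ofReal]
    apply intervalIntegral.integral_congr
    intro x hx
    simp [Complex.mul_conj, Complex.normSq_eq_norm_sq]
  have hIvR : (∫ x in (0:ℝ)..ℓ, R.v x * conj (R.v x)) = ((Jv:ℝ):ℂ) := by
    rw [hJvdef, ← intervalIntegral.integral_ofReal]
    apply intervalIntegral.integral_congr
    intro x hx
    simp [Complex.mul_conj, Complex.normSq_eq_norm_sq]
  have e4 : (∫ x in (0:ℝ)..ℓ, R.u2 x * conj (R.v2 x))
      = -(Complex.I*(R.lam:ℂ))*((Ju:ℝ):ℂ) - Ix := by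
    have hpt : Set.EqOn (fun x => R.u2 x * conj (R.v2 x))
        (fun x => -(Complex.I*(R.lam:ℂ))*(R.u2 x * conj (R.u2 x)) - R.u2 x * conj (R.f1dd x))
        (Set.uIcc 0 ℓ) := by
      rw [hIcc]
      intro x hx
      have hv2x : R.v2 x = Complex.I*(R.lam:ℂ)*R.u2 x - R.f1dd x := by
        linear_combination -hD2 x hx
      simp only [hv2x, map_sub, map_mul, Complex.conj_I, Complex.conj_ofReal]
      ring
    rw [intervalIntegral.integral_congr hpt,
      intervalIntegral.integral_sub (hi4.const_mul _) hi5,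
      intervalIntegral.integral_const_mul, hIuR]
  have e1 : Complex.I*(R.lam:ℂ)*((Jv:ℝ):ℂ)
      + (α:ℂ)*(∫ x in (0:ℝ)..ℓ, R.u4 x * conj (R.v x)) = If := by
    have hpt : Set.EqOn
        (fun x => Complex.I*(R.lam:ℂ)*(R.v x * conj (R.v x)) + (α:ℂ)*(R.u4 x * conj (R.v x)))
        (fun x => R.f2 x * conj (R.v x)) (Set.uIcc 0 ℓ) := by
      rw [hIcc]
      intro x hx
      have := R.res2 x hx
      calc Complex.I*(R.lam:ℂ)*(R.v x * conj (R.v x)) + (α:ℂ)*(R.u4 x * conj (R.v x))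
          = (Complex.I*(R.lam:ℂ)*R.v x + (α:ℂ)*R.u4 x) * conj (R.v x) := by ring
        _ = R.f2 x * conj (R.v x) := by rw [this]
    rw [hIfdef, ← intervalIntegral.integral_congr hpt,
      intervalIntegral.integral_add (hi6.const_mul _) (hi1.const_mul _),
      intervalIntegral.integral_const_mul, intervalIntegral.integral_const_mul, hIvR]
  have hMain : Complex.I*(R.lam:ℂ)*((Jv:ℝ):ℂ) +
      (α:ℂ)*(-(R.u3 0 * conj (R.v 0)) + R.u2 0 * conj (R.v1 0)
        - Complex.I*(R.lam:ℂ)*((Ju:ℝ):ℂ) - Ix) = If := by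
    linear_combination e1 - (α:ℂ)*e2 + (α:ℂ)*e3 - (α:ℂ)*e4
  -- real part identities
  have hP := re_energy α R.lam Jv Ju (R.u3 0 * conj (R.v 0)) (R.u2 0 * conj (R.v1 0)) Ix If hMain
  have hBd := re_boundary m d J γ γs α R.lam (R.v 0) (R.v1 0) (R.u2 0) (R.u3 0)
    R.f41 R.f42 R.res3 R.res4
  -- norm bound for If.re
  have sqrtN : Real.sqrt Jv ≤ N := by
    calc Real.sqrt Jv ≤ Real.sqrt (N^2) := Real.sqrt_le_sqrt hJvN
      _ = N := Real.sqrt_sq hN0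
  have sqrtF2 : Real.sqrt Jf2 ≤ Fn := by
    calc Real.sqrt Jf2 ≤ Real.sqrt (Fn^2) := Real.sqrt_le_sqrt hJf2F
      _ = Fn := Real.sqrt_sq hF0
  have hIfb : |If.re| ≤ N * Fn := by
    have h1 : ‖If‖ ≤ ∫ x in (0:ℝ)..ℓ, ‖R.f2 x * conj (R.v x)‖ :=
      intervalIntegral.norm_integral_le_integral_norm hab
    have h2 : (∫ x in (0:ℝ)..ℓ, ‖R.f2 x * conj (R.v x)‖)
        = ∫ x in (0:ℝ)..ℓ, ‖R.f2 x‖ * ‖R.v x‖ := by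
      apply intervalIntegral.integral_congr
      intro x hx
      simp [norm_mul]
    have h3 := my_cs hab R.hf2c.norm cv.norm
    have h4 : Real.sqrt Jf2 * Real.sqrt Jv ≤ Fn * N :=
      mul_le_mul sqrtF2 sqrtN (Real.sqrt_nonneg _) hF0
    calc |If.re| ≤ ‖If‖ := Complex.abs_re_le_norm _
      _ = ‖If‖ := rfl
      _ ≤ Real.sqrt Jf2 * Real.sqrt Jv := by rw [h2] at h1; exact h1.trans h3
      _ ≤ Fn * N := h4
      _ = N * Fn := mul_comm _ _
  have hIxb : α * |Ix.re| ≤ N * Fn := by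
    have h1 : ‖Ix‖ ≤ ∫ x in (0:ℝ)..ℓ, ‖R.u2 x * conj (R.f1dd x)‖ :=
      intervalIntegral.norm_integral_le_integral_norm hab
    have h2 : (∫ x in (0:ℝ)..ℓ, ‖R.u2 x * conj (R.f1dd x)‖)
        = ∫ x in (0:ℝ)..ℓ, ‖R.u2 x‖ * ‖R.f1dd x‖ := by
      apply intervalIntegral.integral_congr
      intro x hx
      simp [norm_mul]
    have h3 := my_cs hab cu2.norm R.hf1c.norm
    have h4 : |Ix.re| ≤ Real.sqrt Ju * Real.sqrt Jf1 := by
      calc |Ix.re| ≤ ‖Ix‖ := Complex.abs_re_le_norm _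
        _ = ‖Ix‖ := rfl
        _ ≤ Real.sqrt Ju * Real.sqrt Jf1 := by rw [h2] at h1; exact h1.trans h3
    have h5 : α * (Real.sqrt Ju * Real.sqrt Jf1)
        = Real.sqrt (α*Ju) * Real.sqrt (α*Jf1) := by
      have hss : Real.sqrt α * Real.sqrt α = α := Real.mul_self_sqrt hα.le
      calc α * (Real.sqrt Ju * Real.sqrt Jf1)
          = (Real.sqrt α * Real.sqrt Ju) * (Real.sqrt α * Real.sqrt Jf1) := by
            conv_lhs => rw [← hss]
            ring
        _ = Real.sqrt (α*Ju) * Real.sqrt (α*Jf1) := by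
            rw [← Real.sqrt_mul hα.le, ← Real.sqrt_mul hα.le]
    have h6 : Real.sqrt (α*Ju) ≤ N := by
      calc Real.sqrt (α*Ju) ≤ Real.sqrt (N^2) := Real.sqrt_le_sqrt hJuN
        _ = N := Real.sqrt_sq hN0
    have h7 : Real.sqrt (α*Jf1) ≤ Fn := by
      calc Real.sqrt (α*Jf1) ≤ Real.sqrt (Fn^2) := Real.sqrt_le_sqrt hJf1F
        _ = Fn := Real.sqrt_sq hF0
    calc α * |Ix.re| ≤ α * (Real.sqrt Ju * Real.sqrt Jf1) :=
          mul_le_mul_of_nonneg_left h4 hα.le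
      _ = Real.sqrt (α*Ju) * Real.sqrt (α*Jf1) := h5
      _ ≤ N * Fn := mul_le_mul h6 h7 (Real.sqrt_nonneg _) hN0
  -- dissipation bound
  set W := ‖R.v 0‖ with hWdef
  set Z := ‖R.v1 0‖ with hZdef
  set F1 := ‖R.f41‖ with hF1def
  set F2 := ‖R.f42‖ with hF2def
  have hW0 : 0 ≤ W := norm_nonneg _
  have hZ0 : 0 ≤ Z := norm_nonneg _
  have hF10 : 0 ≤ F1 := norm_nonneg _
  have hF20 : 0 ≤ F2 := norm_nonneg _
  set D := γ*W^2 + d*γ*((R.v 0 * conj (R.v1 0)).re) + d*γs*Z^2 with hDdef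
  set Qr := m*((R.f41 * conj (R.v 0)).re) + m*d*((R.f42 * conj (R.v 0)).re)
    + m*d*((R.f41 * conj (R.v1 0)).re) + (J+m*d^2)*((R.f42 * conj (R.v1 0)).re) with hQrdef
  have hDval : D = Qr + α*Ix.re + If.re := by linear_combination hBd + hP
  have hQb : Qr ≤ (m + 2*m*d + J + m*d^2)*K^2*(N*Fn) := by
    have hKFKN : 0 ≤ (K*Fn)*(K*N) := by positivity
    have b1 : (R.f41 * conj (R.v 0)).re ≤ (K*Fn)*(K*N) :=
      (le_abs_self _).trans ((abs_re_mul_conj _ _).trans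
        (mul_le_mul hf41K hwK hW0 (by positivity)))
    have b2 : (R.f42 * conj (R.v 0)).re ≤ (K*Fn)*(K*N) :=
      (le_abs_self _).trans ((abs_re_mul_conj _ _).trans
        (mul_le_mul hf42K hwK hW0 (by positivity)))
    have b3 : (R.f41 * conj (R.v1 0)).re ≤ (K*Fn)*(K*N) :=
      (le_abs_self _).trans ((abs_re_mul_conj _ _).trans
        (mul_le_mul hf41K hzK hZ0 (by positivity)))
    have b4 : (R.f42 * conj (R.v1 0)).re ≤ (K*Fn)*(K*N) :=
      (le_abs_self _).trans ((abs_re_mul_conj _ _).trans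
        (mul_le_mul hf42K hzK hZ0 (by positivity)))
    have c1 := mul_le_mul_of_nonneg_left b1 hm.le
    have c2 := mul_le_mul_of_nonneg_left b2 (by positivity : (0:ℝ) ≤ m*d)
    have c3 := mul_le_mul_of_nonneg_left b3 (by positivity : (0:ℝ) ≤ m*d)
    have c4 := mul_le_mul_of_nonneg_left b4 (by positivity : (0:ℝ) ≤ J+m*d^2)
    rw [hQrdef]
    ring_nf
    ring_nf at c1 c2 c3 c4
    linarith
  have hDub : D ≤ CD*(N*Fn) := by
    have h1 : α*Ix.re ≤ α*|Ix.re| := mul_le_mul_of_nonneg_left (le_abs_self _) hα.le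
    have h2 : If.re ≤ |If.re| := le_abs_self _
    have : D ≤ (m + 2*m*d + J + m*d^2)*K^2*(N*Fn) + N*Fn + N*Fn := by linarith
    rw [hCD]
    linarith
  -- coercivity of the dissipation
  have hns := norm_shift (d/2) (R.v 0) (R.v1 0)
  have hns' : γ*‖R.v 0 + ((d/2:ℝ):ℂ)*R.v1 0‖^2
      = γ*W^2 + γ*d*((R.v 0 * conj (R.v1 0)).re) + γ*(d^2/4)*Z^2 := by
    rw [hns]; ring
  have hprod : 0 ≤ d*(Z^2*(2*γs - d*γ)) := by
    apply mul_nonneg hd.le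
    apply mul_nonneg (sq_nonneg _)
    linarith
  have hprod2 : 0 ≤ d^2*γ*Z^2 := by positivity
  have hkey1 : γ*(d^2/4)*Z^2 ≤ D := by
    have hnn : 0 ≤ γ*‖R.v 0 + ((d/2:ℝ):ℂ)*R.v1 0‖^2 := by positivity
    rw [hDdef]
    linarith [hns', hprod]
  have hkey2 : γ*‖R.v 0 + ((d/2:ℝ):ℂ)*R.v1 0‖^2 ≤ D := by
    rw [hDdef]
    linarith [hns', hprod, hprod2]
  have hNF0 : 0 ≤ N*Fn := mul_nonneg hN0 hF0
  have hZ2T : Z^2 ≤ T*(N*Fn) := by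
    have h1 : γ*(d^2/4)*Z^2 ≤ CD*(N*Fn) := hkey1.trans hDub
    have h2 := mul_le_mul_of_nonneg_right h1
      (le_of_lt (show (0:ℝ) < 4/(γ*d^2) by positivity))
    have h3 : γ*(d^2/4)*Z^2*(4/(γ*d^2)) = Z^2 := by field_simp
    rw [h3] at h2
    have h4 : CD*(N*Fn)*(4/(γ*d^2)) ≤ T*(N*Fn) := by
      rw [hTdef]
      have : 0 ≤ 4/γ*CD*(N*Fn) := by positivity
      ring_nf
      ring_nf at this
      linarith
    linarith
  have hW2T : W^2 ≤ T*(N*Fn) := by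
    have hna : W ≤ ‖R.v 0 + ((d/2:ℝ):ℂ)*R.v1 0‖ + (d/2)*Z := by
      calc W = ‖(R.v 0 + ((d/2:ℝ):ℂ)*R.v1 0) - ((d/2:ℝ):ℂ)*R.v1 0‖ := by
            simp only [add_sub_cancel_right, hWdef]
        _ ≤ ‖R.v 0 + ((d/2:ℝ):ℂ)*R.v1 0‖ + ‖((d/2:ℝ):ℂ)*R.v1 0‖ := norm_sub_le _ _
        _ = ‖R.v 0 + ((d/2:ℝ):ℂ)*R.v1 0‖ + (d/2)*Z := by
            rw [norm_mul, Complex.norm_real, Real.norm_eq_abs, abs_of_pos (by linarith : (0:ℝ) < d/2)]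
    have hWsq : W^2 ≤ 2*‖R.v 0 + ((d/2:ℝ):ℂ)*R.v1 0‖^2 + (d^2/2)*Z^2 := by
      have hmm := mul_self_le_mul_self hW0 hna
      linarith [sq_nonneg (‖R.v 0 + ((d/2:ℝ):ℂ)*R.v1 0‖ - (d/2)*Z), hmm]
    -- 2‖·‖² ≤ 2D/γ and (d²/2)Z² ≤ 2D/γ hence W² ≤ (4/γ)D ≤ (4/γ)CD(N Fn) ≤ T(N Fn)
    have hDu := hDub
    have h2 := mul_le_mul_of_nonneg_right hkey2
      (le_of_lt (show (0:ℝ) < 2/γ by positivity))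
    have h2' : γ*‖R.v 0 + ((d/2:ℝ):ℂ)*R.v1 0‖^2*(2/γ) = 2*‖R.v 0 + ((d/2:ℝ):ℂ)*R.v1 0‖^2 := by
      field_simp
    rw [h2'] at h2
    have h3 := mul_le_mul_of_nonneg_right hkey1
      (le_of_lt (show (0:ℝ) < 2/γ by positivity))
    have h3' : γ*(d^2/4)*Z^2*(2/γ) = (d^2/2)*Z^2 := by field_simp; ring
    rw [h3'] at h3
    have h4 : W^2 ≤ D*(2/γ) + D*(2/γ) := by linarith
    have h5 : D*(2/γ) + D*(2/γ) = D*(4/γ) := by ring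
    have h6 : D*(4/γ) ≤ CD*(N*Fn)*(4/γ) :=
      mul_le_mul_of_nonneg_right hDub (by positivity)
    have h7 : CD*(N*Fn)*(4/γ) ≤ T*(N*Fn) := by
      rw [hTdef]
      have : 0 ≤ 4/(γ*d^2)*CD*(N*Fn) := by positivity
      ring_nf
      ring_nf at this
      linarith
    linarith
  set E := Real.sqrt (N*Fn) with hEdef
  have hE0 : 0 ≤ E := Real.sqrt_nonneg _
  have hE2 : E^2 = N*Fn := Real.sq_sqrt hNF0
  have hZE : Z ≤ sT*E := by
    calc Z = Real.sqrt (Z^2) := (Real.sqrt_sq hZ0).symm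
      _ ≤ Real.sqrt (T*(N*Fn)) := Real.sqrt_le_sqrt hZ2T
      _ = sT*E := by rw [hsT, hEdef, Real.sqrt_mul hT0.le]
  have hWE : W ≤ sT*E := by
    calc W = Real.sqrt (W^2) := (Real.sqrt_sq hW0).symm
      _ ≤ Real.sqrt (T*(N*Fn)) := Real.sqrt_le_sqrt hW2T
      _ = sT*E := by rw [hsT, hEdef, Real.sqrt_mul hT0.le]
  have hEF : E*Fn ≤ (N*Fn + Fn^2)/2 := by linarith [sq_nonneg (E - Fn), hE2]
  -- bound on f1d at 0
  have hf1d0b : ‖R.f1d 0‖ ≤ a*Fn := by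
    have h1 : ‖R.f1d 0‖ = ‖∫ x in (0:ℝ)..ℓ, R.f1dd x‖ := by rw [hf1d0, norm_neg]
    have h2 : ‖∫ x in (0:ℝ)..ℓ, R.f1dd x‖ ≤ ∫ x in (0:ℝ)..ℓ, ‖R.f1dd x‖ :=
      intervalIntegral.norm_integral_le_integral_norm hab
    have h3 : (∫ x in (0:ℝ)..ℓ, ‖R.f1dd x‖) = ∫ x in (0:ℝ)..ℓ, (1:ℝ)*‖R.f1dd x‖ := by
      simp
    have h4 := my_cs hab (continuousOn_const (c := (1:ℝ))) R.hf1c.norm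
    have h5 : (∫ x in (0:ℝ)..ℓ, (1:ℝ)^2) = ℓ := by simp
    rw [h5] at h4
    have h6 : Real.sqrt ℓ * Real.sqrt Jf1 ≤ a * Fn := by
      have hj : ℓ*Jf1 ≤ (ℓ/α)*Fn^2 := by
        have : Jf1 ≤ Fn^2/α := (le_div_iff₀ hα).2 (by linarith)
        have := mul_le_mul_of_nonneg_left this hab
        calc ℓ*Jf1 ≤ ℓ*(Fn^2/α) := this
          _ = (ℓ/α)*Fn^2 := by ring
      calc Real.sqrt ℓ * Real.sqrt Jf1 = Real.sqrt (ℓ*Jf1) := (Real.sqrt_mul hab _).symm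
        _ ≤ Real.sqrt ((ℓ/α)*Fn^2) := Real.sqrt_le_sqrt hj
        _ = a * Fn := by
            rw [Real.sqrt_mul (by positivity) _, Real.sqrt_sq hF0, hadef]
    calc ‖R.f1d 0‖ ≤ ∫ x in (0:ℝ)..ℓ, (1:ℝ)*‖R.f1dd x‖ := by
          rw [h1, ← h3]; exact h2
      _ ≤ Real.sqrt ℓ * Real.sqrt Jf1 := h4
      _ ≤ a*Fn := h6
  -- pointwise norm identity helper
  have hnormr : ∀ (r : ℝ) (x : ℂ), 0 ≤ r → ‖(r:ℂ)*x‖ = r*‖x‖ := by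
    intro r x hr
    rw [norm_mul, Complex.norm_real, Real.norm_eq_abs, abs_of_nonneg hr]
  -- bound |lam| ‖u1 0‖
  have hu1b : |R.lam| * ‖R.u1 0‖ ≤ Z + a*Fn := by
    have h : Complex.I*(R.lam:ℂ)*R.u1 0 = R.v1 0 + R.f1d 0 := by
      linear_combination hD1 0 h0mem
    have h2 : |R.lam| * ‖R.u1 0‖ = ‖Complex.I*(R.lam:ℂ)*R.u1 0‖ := by
      rw [norm_mul, norm_mul, Complex.norm_I, one_mul, Complex.norm_real, Real.norm_eq_abs]
    rw [h2, h]
    calc ‖R.v1 0 + R.f1d 0‖ ≤ ‖R.v1 0‖ + ‖R.f1d 0‖ := norm_add_le _ _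
      _ ≤ Z + a*Fn := by rw [hZdef]; linarith [hf1d0b]
  -- bound α ‖u3 0‖
  have hu3b : α * ‖R.u3 0‖ ≤ (m*F1 + m*d*F2 + γ*W) + |R.lam| * (m*W + m*d*Z) := by
    have h : (α:ℂ)*R.u3 0 = (m:ℂ)*R.f41 + (m:ℂ)*(d:ℂ)*R.f42
        + (-(Complex.I*(R.lam:ℂ)*((m:ℂ)*R.v 0 + (m:ℂ)*(d:ℂ)*R.v1 0)))
        + (-((γ:ℂ)*R.v 0)) := by
      linear_combination R.res3
    have t1 := norm_add_le ((m:ℂ)*R.f41 + (m:ℂ)*(d:ℂ)*R.f42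
        + (-(Complex.I*(R.lam:ℂ)*((m:ℂ)*R.v 0 + (m:ℂ)*(d:ℂ)*R.v1 0)))) (-((γ:ℂ)*R.v 0))
    have t2 := norm_add_le ((m:ℂ)*R.f41 + (m:ℂ)*(d:ℂ)*R.f42)
        (-(Complex.I*(R.lam:ℂ)*((m:ℂ)*R.v 0 + (m:ℂ)*(d:ℂ)*R.v1 0)))
    have t3 := norm_add_le ((m:ℂ)*R.f41) ((m:ℂ)*(d:ℂ)*R.f42)
    have n1 : ‖(m:ℂ)*R.f41‖ = m*F1 := hnormr m _ hm.le
    have n2 : ‖(m:ℂ)*(d:ℂ)*R.f42‖ = m*d*F2 := by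
      have hmd : (m:ℂ)*(d:ℂ) = ((m*d:ℝ):ℂ) := by push_cast; ring
      rw [hmd, hnormr (m*d) _ (by positivity)]
    have n3 : ‖-((γ:ℂ)*R.v 0)‖ = γ*W := by rw [norm_neg, hnormr γ _ hγ.le]
    have n4 : ‖-(Complex.I*(R.lam:ℂ)*((m:ℂ)*R.v 0 + (m:ℂ)*(d:ℂ)*R.v1 0))‖
        ≤ |R.lam| * (m*W + m*d*Z) := by
      rw [norm_neg, norm_mul, norm_mul, Complex.norm_I, one_mul, Complex.norm_real,
        Real.norm_eq_abs]
      apply mul_le_mul_of_nonneg_left _ (abs_nonneg _)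
      calc ‖(m:ℂ)*R.v 0 + (m:ℂ)*(d:ℂ)*R.v1 0‖
          ≤ ‖(m:ℂ)*R.v 0‖ + ‖(m:ℂ)*(d:ℂ)*R.v1 0‖ := norm_add_le _ _
        _ = m*W + m*d*Z := by
            have hmd : (m:ℂ)*(d:ℂ) = ((m*d:ℝ):ℂ) := by push_cast; ring
            rw [hnormr m _ hm.le, hmd, hnormr (m*d) _ (by positivity)]
    calc α * ‖R.u3 0‖ = ‖(α:ℂ)*R.u3 0‖ := (hnormr α _ hα.le).symm
      _ = ‖(m:ℂ)*R.f41 + (m:ℂ)*(d:ℂ)*R.f42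
          + (-(Complex.I*(R.lam:ℂ)*((m:ℂ)*R.v 0 + (m:ℂ)*(d:ℂ)*R.v1 0)))
          + (-((γ:ℂ)*R.v 0))‖ := by rw [h]
      _ ≤ (m*F1 + m*d*F2 + γ*W) + |R.lam| * (m*W + m*d*Z) := by
          linarith [t1, t2, t3, n1.le, n2.le, n3.le, n4, n1.ge, n2.ge, n3.ge]
  -- bound α ‖u2 0‖
  have hu2b : α * ‖R.u2 0‖ ≤ (m*d*F1 + (J+m*d^2)*F2 + d*γ*W + d*γs*Z)
      + |R.lam| * (m*d*W + (J+m*d^2)*Z) := by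
    have h : (α:ℂ)*R.u2 0 = Complex.I*(R.lam:ℂ)*((m:ℂ)*(d:ℂ)*R.v 0
          + ((J:ℂ)+(m:ℂ)*(d:ℂ)^2)*R.v1 0)
        + (d:ℂ)*(γ:ℂ)*R.v 0 + (d:ℂ)*(γs:ℂ)*R.v1 0
        + (-((m:ℂ)*(d:ℂ)*R.f41)) + (-(((J:ℂ)+(m:ℂ)*(d:ℂ)^2)*R.f42)) := by
      linear_combination -R.res4
    have hmd : (m:ℂ)*(d:ℂ) = ((m*d:ℝ):ℂ) := by push_cast; ring
    have hJmd : ((J:ℂ)+(m:ℂ)*(d:ℂ)^2) = ((J+m*d^2:ℝ):ℂ) := by push_cast; ring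
    have hdg : (d:ℂ)*(γ:ℂ) = ((d*γ:ℝ):ℂ) := by push_cast; ring
    have hdgs : (d:ℂ)*(γs:ℂ) = ((d*γs:ℝ):ℂ) := by push_cast; ring
    have t1 := norm_add_le (Complex.I*(R.lam:ℂ)*((m:ℂ)*(d:ℂ)*R.v 0
          + ((J:ℂ)+(m:ℂ)*(d:ℂ)^2)*R.v1 0)
        + (d:ℂ)*(γ:ℂ)*R.v 0 + (d:ℂ)*(γs:ℂ)*R.v1 0
        + (-((m:ℂ)*(d:ℂ)*R.f41))) (-(((J:ℂ)+(m:ℂ)*(d:ℂ)^2)*R.f42))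
    have t2 := norm_add_le (Complex.I*(R.lam:ℂ)*((m:ℂ)*(d:ℂ)*R.v 0
          + ((J:ℂ)+(m:ℂ)*(d:ℂ)^2)*R.v1 0)
        + (d:ℂ)*(γ:ℂ)*R.v 0 + (d:ℂ)*(γs:ℂ)*R.v1 0) (-((m:ℂ)*(d:ℂ)*R.f41))
    have t3 := norm_add_le (Complex.I*(R.lam:ℂ)*((m:ℂ)*(d:ℂ)*R.v 0
          + ((J:ℂ)+(m:ℂ)*(d:ℂ)^2)*R.v1 0)
        + (d:ℂ)*(γ:ℂ)*R.v 0) ((d:ℂ)*(γs:ℂ)*R.v1 0)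
    have t4 := norm_add_le (Complex.I*(R.lam:ℂ)*((m:ℂ)*(d:ℂ)*R.v 0
          + ((J:ℂ)+(m:ℂ)*(d:ℂ)^2)*R.v1 0)) ((d:ℂ)*(γ:ℂ)*R.v 0)
    have n1 : ‖Complex.I*(R.lam:ℂ)*((m:ℂ)*(d:ℂ)*R.v 0
          + ((J:ℂ)+(m:ℂ)*(d:ℂ)^2)*R.v1 0)‖ ≤ |R.lam| * (m*d*W + (J+m*d^2)*Z) := by
      rw [norm_mul, norm_mul, Complex.norm_I, one_mul, Complex.norm_real, Real.norm_eq_abs]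
      apply mul_le_mul_of_nonneg_left _ (abs_nonneg _)
      calc ‖(m:ℂ)*(d:ℂ)*R.v 0 + ((J:ℂ)+(m:ℂ)*(d:ℂ)^2)*R.v1 0‖
          ≤ ‖(m:ℂ)*(d:ℂ)*R.v 0‖ + ‖((J:ℂ)+(m:ℂ)*(d:ℂ)^2)*R.v1 0‖ := norm_add_le _ _
        _ = m*d*W + (J+m*d^2)*Z := by
            rw [hmd, hJmd, hnormr (m*d) _ (by positivity), hnormr (J+m*d^2) _ (by positivity)]
    have n2 : ‖(d:ℂ)*(γ:ℂ)*R.v 0‖ = d*γ*W := by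
      rw [hdg, hnormr (d*γ) _ (by positivity)]
    have n3 : ‖(d:ℂ)*(γs:ℂ)*R.v1 0‖ = d*γs*Z := by
      rw [hdgs, hnormr (d*γs) _ (by positivity)]
    have n4 : ‖-((m:ℂ)*(d:ℂ)*R.f41)‖ = m*d*F1 := by
      rw [norm_neg, hmd, hnormr (m*d) _ (by positivity)]
    have n5 : ‖-(((J:ℂ)+(m:ℂ)*(d:ℂ)^2)*R.f42)‖ = (J+m*d^2)*F2 := by
      rw [norm_neg, hJmd, hnormr (J+m*d^2) _ (by positivity)]
    calc α * ‖R.u2 0‖ = ‖(α:ℂ)*R.u2 0‖ := (hnormr α _ hα.le).symm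
      _ = ‖Complex.I*(R.lam:ℂ)*((m:ℂ)*(d:ℂ)*R.v 0
          + ((J:ℂ)+(m:ℂ)*(d:ℂ)^2)*R.v1 0)
        + (d:ℂ)*(γ:ℂ)*R.v 0 + (d:ℂ)*(γs:ℂ)*R.v1 0
        + (-((m:ℂ)*(d:ℂ)*R.f41)) + (-(((J:ℂ)+(m:ℂ)*(d:ℂ)^2)*R.f42))‖ := by rw [h]
      _ ≤ (m*d*F1 + (J+m*d^2)*F2 + d*γ*W + d*γs*Z)
          + |R.lam| * (m*d*W + (J+m*d^2)*Z) := by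
          linarith [t1, t2, t3, t4, n1, n2.le, n3.le, n4.le, n5.le, n2.ge, n3.ge, n4.ge, n5.ge]
  -- final assembly
  have hlampos : (0:ℝ) < |R.lam| := lt_of_lt_of_le one_pos hlam
  have hZaF0 : 0 ≤ Z + a*Fn := by positivity
  have hS0 : 0 ≤ N*Fn + Fn^2 := by positivity
  have hEFn' : E*Fn ≤ N*Fn + Fn^2 := hEF.trans (by linarith [hNF0, sq_nonneg Fn])
  have hE2' : E^2 ≤ N*Fn + Fn^2 := by linarith [sq_nonneg Fn]
  have hFn2' : Fn^2 ≤ N*Fn + Fn^2 := by linarith [hNF0]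
  have hgen : ∀ p q : ℝ, 0 ≤ p → 0 ≤ q →
      (sT*E + a*Fn)*(p*Fn + q*E) ≤ (sT+a)*(p+q)*(N*Fn + Fn^2) := by
    intro p q hp hq
    have u1 : sT*p*(E*Fn) ≤ sT*p*(N*Fn+Fn^2) :=
      mul_le_mul_of_nonneg_left hEFn' (by positivity)
    have u2 : sT*q*(E^2) ≤ sT*q*(N*Fn+Fn^2) :=
      mul_le_mul_of_nonneg_left hE2' (by positivity)
    have u3 : a*p*(Fn^2) ≤ a*p*(N*Fn+Fn^2) :=
      mul_le_mul_of_nonneg_left hFn2' (by positivity)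
    have u4 : a*q*(E*Fn) ≤ a*q*(N*Fn+Fn^2) :=
      mul_le_mul_of_nonneg_left hEFn' (by positivity)
    ring_nf
    ring_nf at u1 u2 u3 u4
    linarith
  have hs1 : Z + a*Fn ≤ sT*E + a*Fn := by linarith [hZE]
  have hBle : (sT+a)*(c5+c6) ≤ (sT+a)*(c5+c6+c7+c8)+1 ∧
      (sT+a)*(c7+c8) ≤ (sT+a)*(c5+c6+c7+c8)+1 := by
    constructor
    · linarith [mul_nonneg (by positivity : (0:ℝ) ≤ sT+a) (by positivity : (0:ℝ) ≤ c7+c8)]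
    · linarith [mul_nonneg (by positivity : (0:ℝ) ≤ sT+a) (by positivity : (0:ℝ) ≤ c5+c6)]
  constructor
  · -- u1 * u3
    have hG2 : (m*F1 + m*d*F2 + γ*W) + (m*W + m*d*Z) ≤ c5*Fn + c6*E := by
      have b1 : m*F1 ≤ m*(K*Fn) := mul_le_mul_of_nonneg_left hf41K hm.le
      have b2 : m*d*F2 ≤ m*d*(K*Fn) := mul_le_mul_of_nonneg_left hf42K (by positivity)
      have b3 : γ*W ≤ γ*(sT*E) := mul_le_mul_of_nonneg_left hWE hγ.le
      have b4 : m*W ≤ m*(sT*E) := mul_le_mul_of_nonneg_left hWE hm.le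
      have b5 : m*d*Z ≤ m*d*(sT*E) := mul_le_mul_of_nonneg_left hZE (by positivity)
      rw [hc5, hc6]
      ring_nf
      ring_nf at b1 b2 b3 b4 b5
      linarith
    have hG10 : 0 ≤ m*F1 + m*d*F2 + γ*W := by positivity
    have hG20 : 0 ≤ m*W + m*d*Z := by positivity
    have hstep1 : α*(‖R.u1 0‖*‖R.u3 0‖)
        ≤ (Z + a*Fn)*((m*F1 + m*d*F2 + γ*W) + (m*W + m*d*Z)) := by
      have hmul := mul_le_mul hu1b hu3b (by positivity) hZaF0
      have e' : (Z+a*Fn)*(m*F1 + m*d*F2 + γ*W)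
          ≤ |R.lam| * ((Z+a*Fn)*(m*F1 + m*d*F2 + γ*W)) :=
        le_mul_of_one_le_left (by positivity) hlam
      have final : |R.lam| * (α*(‖R.u1 0‖*‖R.u3 0‖))
          ≤ |R.lam| * ((Z + a*Fn)*((m*F1 + m*d*F2 + γ*W) + (m*W + m*d*Z))) := by
        linarith [hmul, e']
      exact le_of_mul_le_mul_left final hlampos
    have h2 : (Z + a*Fn)*((m*F1 + m*d*F2 + γ*W) + (m*W + m*d*Z))
        ≤ (sT*E + a*Fn)*(c5*Fn + c6*E) :=
      mul_le_mul hs1 hG2 (by linarith) (by positivity)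
    have h4 : α*(‖R.u1 0‖*‖R.u3 0‖) ≤ (sT+a)*(c5+c6)*(N*Fn+Fn^2) :=
      ((hstep1.trans h2).trans (hgen c5 c6 hc50.le hc60))
    rw [div_mul_eq_mul_div, le_div_iff₀ hα]
    have h5 : (sT+a)*(c5+c6)*(N*Fn+Fn^2)
        ≤ ((sT+a)*(c5+c6+c7+c8)+1)*(N*Fn+Fn^2) :=
      mul_le_mul_of_nonneg_right hBle.1 hS0
    linarith [h4, h5]
  · -- u1 * u2
    have hG2 : (m*d*F1 + (J+m*d^2)*F2 + d*γ*W + d*γs*Z) + (m*d*W + (J+m*d^2)*Z)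
        ≤ c7*Fn + c8*E := by
      have b1 : m*d*F1 ≤ m*d*(K*Fn) := mul_le_mul_of_nonneg_left hf41K (by positivity)
      have b2 : (J+m*d^2)*F2 ≤ (J+m*d^2)*(K*Fn) :=
        mul_le_mul_of_nonneg_left hf42K (by positivity)
      have b3 : d*γ*W ≤ d*γ*(sT*E) := mul_le_mul_of_nonneg_left hWE (by positivity)
      have b4 : d*γs*Z ≤ d*γs*(sT*E) := mul_le_mul_of_nonneg_left hZE (by positivity)
      have b5 : m*d*W ≤ m*d*(sT*E) := mul_le_mul_of_nonneg_left hWE (by positivity)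
      have b6 : (J+m*d^2)*Z ≤ (J+m*d^2)*(sT*E) := mul_le_mul_of_nonneg_left hZE (by positivity)
      rw [hc7, hc8]
      ring_nf
      ring_nf at b1 b2 b3 b4 b5 b6
      linarith
    have hG10 : 0 ≤ m*d*F1 + (J+m*d^2)*F2 + d*γ*W + d*γs*Z := by positivity
    have hG20 : 0 ≤ m*d*W + (J+m*d^2)*Z := by positivity
    have hstep1 : α*(‖R.u1 0‖*‖R.u2 0‖)
        ≤ (Z + a*Fn)*((m*d*F1 + (J+m*d^2)*F2 + d*γ*W + d*γs*Z) + (m*d*W + (J+m*d^2)*Z)) := by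
      have hmul := mul_le_mul hu1b hu2b (by positivity) hZaF0
      have e' : (Z+a*Fn)*(m*d*F1 + (J+m*d^2)*F2 + d*γ*W + d*γs*Z)
          ≤ |R.lam| * ((Z+a*Fn)*(m*d*F1 + (J+m*d^2)*F2 + d*γ*W + d*γs*Z)) :=
        le_mul_of_one_le_left (by positivity) hlam
      have final : |R.lam| * (α*(‖R.u1 0‖*‖R.u2 0‖))
          ≤ |R.lam| * ((Z + a*Fn)*((m*d*F1 + (J+m*d^2)*F2 + d*γ*W + d*γs*Z)
            + (m*d*W + (J+m*d^2)*Z))) := by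
        linarith [hmul, e']
      exact le_of_mul_le_mul_left final hlampos
    have h2 : (Z + a*Fn)*((m*d*F1 + (J+m*d^2)*F2 + d*γ*W + d*γs*Z) + (m*d*W + (J+m*d^2)*Z))
        ≤ (sT*E + a*Fn)*(c7*Fn + c8*E) :=
      mul_le_mul hs1 hG2 (by linarith) (by positivity)
    have h4 : α*(‖R.u1 0‖*‖R.u2 0‖) ≤ (sT+a)*(c7+c8)*(N*Fn+Fn^2) :=
      ((hstep1.trans h2).trans (hgen c7 c8 hc70.le hc80))
    rw [div_mul_eq_mul_div, le_div_iff₀ hα]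
    have h5 : (sT+a)*(c7+c8)*(N*Fn+Fn^2)
        ≤ ((sT+a)*(c5+c6+c7+c8)+1)*(N*Fn+Fn^2) :=
      mul_le_mul_of_nonneg_right hBle.2 hS0
    linarith [h4, h5]
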